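/- arXiv:1405.2017 — 5 statements merged into one kernel-verified Lean document; each statement's English description precedes it below -/
import Mathlib

section
/- Let λ > 0, R > 0, T_d > 0, η_c > 2, η_d > 2. Then ∫₀^R (2r/R²)·exp(−πλ·r^{2η_d/η_c}/T_d^{2/η_c}) dr = (η_c·T_d^{2/η_d})/(η_d·R²)·(1/(πλ))^{η_c/η_d}·γ(η_c/η_d, πλ·(R^{η_d}/T_d)^{2/η_c}), where γ(a,b) = ∫₀^b x^{a−1} e^{−x} dx is the lower incomplete gamma function. -/
open Real MeasureTheory

/-- Lower incomplete gamma function γ(a,b) = ∫₀^b x^{a-1} e^{-x} dx. -/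
noncomputable def lowerGamma (a b : ℝ) : ℝ := ∫ x in (0:ℝ)..b, x ^ (a - 1) * Real.exp (-x)

lemma gammaIntegrand_intble {a : ℝ} (ha : 0 < a) {t : ℝ} (ht : 0 ≤ t) :
    IntervalIntegrable (fun x : ℝ => x ^ (a - 1) * Real.exp (-x)) volume 0 t := by
  rw [intervalIntegrable_iff_integrableOn_Ioc_of_le ht]
  have h := (Real.GammaIntegral_convergent ha).mono_set (Set.Ioc_subset_Ioi_self : Set.Ioc (0:ℝ) t ⊆ Set.Ioi 0)
  exact h.congr_fun (fun x _ => mul_comm _ _) measurableSet_Ioc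

lemma lowerGamma_hasDerivAt {a : ℝ} (ha : 0 < a) {t : ℝ} (ht : 0 < t) :
    HasDerivAt (lowerGamma a) (t ^ (a - 1) * Real.exp (-t)) t := by
  have hcont : ∀ x ∈ Set.Ioi (0:ℝ),
      ContinuousAt (fun x : ℝ => x ^ (a - 1) * Real.exp (-x)) x := fun x hx =>
    (Real.continuousAt_rpow_const x (a - 1) (Or.inl (ne_of_gt hx))).mul
      ((Real.continuous_exp.comp continuous_neg).continuousAt)
  exact intervalIntegral.integral_hasDerivAt_right (gammaIntegrand_intble ha ht.le)
    (ContinuousAt.stronglyMeasurableAtFilter isOpen_Ioi hcont t ht)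
    (hcont t ht)

lemma lowerGamma_continuousOn {a : ℝ} (ha : 0 < a) {T : ℝ} (hT : 0 ≤ T) :
    ContinuousOn (lowerGamma a) (Set.Icc 0 T) := by
  have h : IntegrableOn (fun x : ℝ => x ^ (a - 1) * Real.exp (-x)) (Set.uIcc 0 T) volume := by
    rw [Set.uIcc_of_le hT, integrableOn_Icc_iff_integrableOn_Ioc]
    exact (intervalIntegrable_iff_integrableOn_Ioc_of_le hT).mp (gammaIntegrand_intble ha hT)
  have := intervalIntegral.continuousOn_primitive_interval h
  rwa [Set.uIcc_of_le hT] at this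

lemma key (c α : ℝ) (hc : 0 < c) (hα : 0 < α) {b : ℝ} (hb : 0 < b) :
    ∫ r in (0:ℝ)..b, 2 * r * Real.exp (-(c * r ^ α)) =
      (2 / α) * c ^ (-(2 / α)) * lowerGamma (2 / α) (c * b ^ α) := by
  have ha : (0:ℝ) < 2 / α := div_pos two_pos hα
  set f : ℝ → ℝ := fun r => 2 * r * Real.exp (-(c * r ^ α)) with hf
  have hfc : Continuous f := by
    have : Continuous fun r : ℝ => r ^ α := Real.continuous_rpow_const hα.le
    continuity
  set F : ℝ → ℝ := fun u => ∫ r in (0:ℝ)..u, f r with hF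
  set G : ℝ → ℝ := fun u => (2 / α) * c ^ (-(2 / α)) * lowerGamma (2 / α) (c * u ^ α) with hG
  have hFd : ∀ x : ℝ, HasDerivAt F (f x) x := by
    intro x
    exact intervalIntegral.integral_hasDerivAt_right (hfc.intervalIntegrable 0 x)
      (ContinuousAt.stronglyMeasurableAtFilter isOpen_univ
        (fun y _ => hfc.continuousAt) x (Set.mem_univ x))
      hfc.continuousAt
  have hGd : ∀ x : ℝ, 0 < x → HasDerivAt G (f x) x := by
    intro x hx
    have hxα : (0:ℝ) < x ^ α := Real.rpow_pos_of_pos hx α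
    have hcx : (0:ℝ) < c * x ^ α := mul_pos hc hxα
    have hg : HasDerivAt (fun u : ℝ => c * u ^ α) (c * (α * x ^ (α - 1))) x :=
      (Real.hasDerivAt_rpow_const (Or.inl hx.ne')).const_mul c
    have hΦ : HasDerivAt (lowerGamma (2 / α))
        ((c * x ^ α) ^ (2 / α - 1) * Real.exp (-(c * x ^ α))) (c * x ^ α) :=
      lowerGamma_hasDerivAt ha hcx
    have hcomp := (hΦ.comp x hg).const_mul ((2 / α) * c ^ (-(2 / α)))
    have hkey : (2 / α) * c ^ (-(2 / α)) *
        ((c * x ^ α) ^ (2 / α - 1) * Real.exp (-(c * x ^ α)) * (c * (α * x ^ (α - 1)))) = f x := by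
      have e1 : (c * x ^ α) ^ (2 / α - 1) = c ^ (2 / α - 1) * x ^ (2 - α) := by
        rw [Real.mul_rpow hc.le hxα.le, ← Real.rpow_mul hx.le]
        congr 1
        field_simp
      have e2 : x ^ (2 - α) * x ^ (α - 1) = x := by
        rw [← Real.rpow_add hx, show (2 - α) + (α - 1) = 1 by ring, Real.rpow_one]
      have e3 : c ^ (-(2 / α)) * c ^ (2 / α - 1) * c = 1 := by
        rw [← Real.rpow_add hc, show -(2 / α) + (2 / α - 1) = -1 by ring, Real.rpow_neg_one]
        exact inv_mul_cancel₀ hc.ne'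
      have e4 : (2 / α) * α = 2 := by field_simp
      calc (2 / α) * c ^ (-(2 / α)) *
          ((c * x ^ α) ^ (2 / α - 1) * Real.exp (-(c * x ^ α)) * (c * (α * x ^ (α - 1))))
          = ((2 / α) * α) * (c ^ (-(2 / α)) * c ^ (2 / α - 1) * c) *
            (x ^ (2 - α) * x ^ (α - 1)) * Real.exp (-(c * x ^ α)) := by rw [e1]; ring
        _ = f x := by rw [e2, e3, e4]; simp only [hf]; ring
    simpa [hG, hkey, Function.comp] using hcomp
  -- h := F - G is constant on [0, b]
  have hmaps : ∀ x ∈ Set.Icc (0:ℝ) b, c * x ^ α ∈ Set.Icc (0:ℝ) (c * b ^ α) := by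
    intro x hx
    constructor
    · exact mul_nonneg hc.le (Real.rpow_nonneg hx.1 α)
    · exact mul_le_mul_of_nonneg_left (Real.rpow_le_rpow hx.1 hx.2 hα.le) hc.le
  have hGc : ContinuousOn G (Set.Icc 0 b) := by
    have hT : (0:ℝ) ≤ c * b ^ α := mul_nonneg hc.le (Real.rpow_nonneg hb.le α)
    exact continuousOn_const.mul (((lowerGamma_continuousOn ha hT).comp
      (continuous_const.mul (Real.continuous_rpow_const hα.le)).continuousOn hmaps))
  have hFc : ContinuousOn F (Set.Icc 0 b) := fun x _ => (hFd x).continuousAt.continuousWithinAt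
  set h : ℝ → ℝ := fun u => F u - G u with hh
  have hhd : ∀ x ∈ interior (Set.Icc (0:ℝ) b), HasDerivAt h 0 x := by
    intro x hx
    rw [interior_Icc] at hx
    have := (hFd x).sub (hGd x hx.1)
    exact (by simpa using this : HasDerivAt (F - G) 0 x)
  have hhc : ContinuousOn h (Set.Icc 0 b) := hFc.sub hGc
  have hdiff : DifferentiableOn ℝ h (interior (Set.Icc (0:ℝ) b)) :=
    fun x hx => ((hhd x hx).differentiableAt).differentiableWithinAt
  have hmono : MonotoneOn h (Set.Icc 0 b) :=
    monotoneOn_of_deriv_nonneg (convex_Icc 0 b) hhc hdiff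
      (fun x hx => by rw [(hhd x hx).deriv])
  have hanti : AntitoneOn h (Set.Icc 0 b) :=
    antitoneOn_of_deriv_nonpos (convex_Icc 0 b) hhc hdiff
      (fun x hx => by rw [(hhd x hx).deriv])
  have h0 : (0:ℝ) ∈ Set.Icc (0:ℝ) b := Set.left_mem_Icc.mpr hb.le
  have hbm : b ∈ Set.Icc (0:ℝ) b := Set.right_mem_Icc.mpr hb.le
  have heq : h b = h 0 :=
    le_antisymm (hanti h0 hbm hb.le) (hmono h0 hbm hb.le)
  have hzero : h 0 = 0 := by
    simp [hh, hF, hG, Real.zero_rpow hα.ne', lowerGamma]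
  have : h b = 0 := heq.trans hzero
  have := sub_eq_zero.mp this
  simpa [hF, hG] using this

theorem stmt0 (lam R Td ηc ηd : ℝ) (hlam : 0 < lam) (hR : 0 < R) (hTd : 0 < Td)
    (hc : 2 < ηc) (hd : 2 < ηd) :
    (∫ r in (0:ℝ)..R, (2 * r / R ^ 2) *
        Real.exp (-(π * lam * r ^ (2 * ηd / ηc) / Td ^ (2 / ηc)))) =
      (ηc * Td ^ (2 / ηd)) / (ηd * R ^ 2) * (1 / (π * lam)) ^ (ηc / ηd) *
        lowerGamma (ηc / ηd) (π * lam * (R ^ ηd / Td) ^ (2 / ηc)) := by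
  have hpl : (0:ℝ) < π * lam := by positivity
  have hηc : (0:ℝ) < ηc := by linarith
  have hηd : (0:ℝ) < ηd := by linarith
  set c : ℝ := π * lam / Td ^ (2 / ηc) with hcdef
  set α : ℝ := 2 * ηd / ηc with hαdef
  have hc0 : 0 < c := by positivity
  have hα0 : 0 < α := by positivity
  have h2α : 2 / α = ηc / ηd := by
    rw [hαdef, div_div_eq_mul_div, mul_div_mul_left _ _ (two_ne_zero)]
  -- rewrite integrand
  have hint : ∀ r : ℝ, (2 * r / R ^ 2) *
      Real.exp (-(π * lam * r ^ (2 * ηd / ηc) / Td ^ (2 / ηc))) =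
      (1 / R ^ 2) * (2 * r * Real.exp (-(c * r ^ α))) := by
    intro r
    rw [hcdef, hαdef]
    ring_nf
  rw [intervalIntegral.integral_congr (fun r _ => hint r), intervalIntegral.integral_const_mul,
    key c α hc0 hα0 hR]
  -- now match constants
  have harg : c * R ^ α = π * lam * (R ^ ηd / Td) ^ (2 / ηc) := by
    rw [hcdef, hαdef, Real.div_rpow (Real.rpow_nonneg hR.le ηd) hTd.le,
      ← Real.rpow_mul hR.le, show ηd * (2 / ηc) = 2 * ηd / ηc by ring]
    field_simp
  have hcpow : c ^ (-(ηc / ηd)) = Td ^ (2 / ηd) * (1 / (π * lam)) ^ (ηc / ηd) := by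
    rw [hcdef, Real.rpow_neg (by positivity), Real.div_rpow hpl.le
      (Real.rpow_nonneg hTd.le _), ← Real.rpow_mul hTd.le,
      show 2 / ηc * (ηc / ηd) = 2 / ηd by
        rw [div_mul_div_comm, mul_comm 2 ηc, mul_div_mul_left _ _ hηc.ne']]
    rw [one_div, Real.inv_rpow hpl.le, inv_div]
    rw [div_eq_mul_inv]
  rw [harg, h2α, hcpow]
  field_simp
end

section
/- Let λ > 0, ρ_o > 0, P_u > 0, η_c > 2, α > 0. Then ∫₀^{P_u} x^α · (2πλ x^{2/η_c − 1} e^{−πλ(x/ρ_o)^{2/η_c}}) / (η_c ρ_o^{2/η_c} (1 − e^{−πλ(P_u/ρ_o)^{2/η_c}})) dx = ρ_o^α · γ(αη_c/2 + 1, πλ(P_u/ρ_o)^{2/η_c}) / ((πλ)^{αη_c/2} · (1 − e^{−πλ(P_u/ρ_o)^{2/η_c}})), where γ is the lower incomplete gamma function. -/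
open Real MeasureTheory

theorem stmt3 (lam ρo Pu ηc α : ℝ) (hlam : 0 < lam) (hρ : 0 < ρo) (hPu : 0 < Pu)
    (hc : 2 < ηc) (hα : 0 < α) :
    (∫ x in (0:ℝ)..Pu,
        x ^ α * (2 * π * lam * x ^ (2 / ηc - 1) *
            Real.exp (-(π * lam * (x / ρo) ^ (2 / ηc)))) /
          (ηc * ρo ^ (2 / ηc) * (1 - Real.exp (-(π * lam * (Pu / ρo) ^ (2 / ηc)))))) =
      ρo ^ α * lowerGamma (α * ηc / 2 + 1) (π * lam * (Pu / ρo) ^ (2 / ηc)) /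
        ((π * lam) ^ (α * ηc / 2) *
          (1 - Real.exp (-(π * lam * (Pu / ρo) ^ (2 / ηc))))) := by
  have hηc : (0:ℝ) < ηc := by linarith
  set q : ℝ := 2 / ηc with hqdef
  have hq0 : (0:ℝ) < q := by positivity
  have hq1 : q < 1 := by rw [hqdef, div_lt_one hηc]; linarith
  set c : ℝ := π * lam with hcdef
  have hc0 : 0 < c := by have := Real.pi_pos; positivity
  set a : ℝ := α * ηc / 2 + 1 with hadef
  have ha1 : a - 1 = α / q := by
    rw [hadef, hqdef]; field_simp; ring
  have ha1pos : 0 < a - 1 := by rw [ha1]; positivity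
  set T : ℝ := c * (Pu / ρo) ^ q with hTdef
  have hT0 : 0 < T := by
    have : (0:ℝ) < (Pu / ρo) ^ q := Real.rpow_pos_of_pos (by positivity) q
    positivity
  set D : ℝ := 1 - Real.exp (-T) with hDdef
  have hD0 : 0 < D := by
    rw [hDdef, sub_pos]
    exact Real.exp_lt_one_iff.mpr (by linarith)
  set K : ℝ := ρo ^ α / (c ^ (a - 1) * D) with hKdef
  -- continuity of the gamma integrand
  have hg_cont : Continuous fun u : ℝ => u ^ (a - 1) * Real.exp (-u) := by
    refine Continuous.mul ?_ (Real.continuous_exp.comp continuous_neg)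
    rw [continuous_iff_continuousAt]
    exact fun x => Real.continuousAt_rpow_const x _ (Or.inr ha1pos.le)
  -- derivative of the primitive
  have hΓ : ∀ b : ℝ, HasDerivAt (fun u : ℝ => ∫ t in (0:ℝ)..u, t ^ (a - 1) * Real.exp (-t))
      (b ^ (a - 1) * Real.exp (-b)) b := fun b =>
    intervalIntegral.integral_hasDerivAt_right (hg_cont.intervalIntegrable _ _)
      (hg_cont.stronglyMeasurableAtFilter _ _) hg_cont.continuousAt
  have hprim_cont : Continuous fun u : ℝ => ∫ t in (0:ℝ)..u, t ^ (a - 1) * Real.exp (-t) :=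
    intervalIntegral.continuous_primitive (fun x y => hg_cont.intervalIntegrable x y) 0
  -- the map φ
  set φ : ℝ → ℝ := fun x => c * (x / ρo) ^ q with hφdef
  have hpow_cont : Continuous fun y : ℝ => y ^ q :=
    continuous_iff_continuousAt.2 fun x => Real.continuousAt_rpow_const x _ (Or.inr hq0.le)
  have hφcont : Continuous φ :=
    continuous_const.mul (hpow_cont.comp (continuous_id.div_const ρo))
  set G : ℝ → ℝ := fun x => K * ∫ t in (0:ℝ)..(φ x), t ^ (a - 1) * Real.exp (-t) with hGdef
  have hGcont : Continuous G := continuous_const.mul (hprim_cont.comp hφcont)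
  set f : ℝ → ℝ := fun x =>
      x ^ α * (2 * π * lam * x ^ (q - 1) * Real.exp (-(c * (x / ρo) ^ q))) /
        (ηc * ρo ^ q * D) with hfdef
  -- derivative of G on (0, Pu)
  have hGderiv : ∀ x ∈ Set.Ioo (0:ℝ) Pu, HasDerivAt G (f x) x := by
    intro x hx
    have hx0 : 0 < x := hx.1
    have hxρ : 0 < x / ρo := by positivity
    have hdiv : HasDerivAt (fun y : ℝ => y / ρo) (1 / ρo) x := by
      simpa using (hasDerivAt_id x).div_const ρo
    have hφd : HasDerivAt φ (c * (1 / ρo * q * (x / ρo) ^ (q - 1))) x :=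
      (hdiv.rpow_const (Or.inl hxρ.ne')).const_mul c
    have hcomp : HasDerivAt (fun y => ∫ t in (0:ℝ)..(φ y), t ^ (a - 1) * Real.exp (-t))
        ((φ x) ^ (a - 1) * Real.exp (-(φ x)) * (c * (1 / ρo * q * (x / ρo) ^ (q - 1)))) x :=
      (hΓ (φ x)).comp x hφd
    have hG : HasDerivAt G
        (K * ((φ x) ^ (a - 1) * Real.exp (-(φ x)) * (c * (1 / ρo * q * (x / ρo) ^ (q - 1))))) x :=
      hcomp.const_mul K
    convert hG using 1
    -- algebra: show f x equals the derivative expression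
    have e1 : (φ x) ^ (a - 1) = c ^ (a - 1) * (x ^ α / ρo ^ α) := by
      show (c * (x / ρo) ^ q) ^ (a - 1) = _
      rw [Real.mul_rpow hc0.le (Real.rpow_nonneg hxρ.le q), ← Real.rpow_mul hxρ.le,
        show q * (a - 1) = α by rw [ha1]; field_simp, Real.div_rpow hx0.le hρ.le]
    have e2 : (x / ρo) ^ (q - 1) = x ^ (q - 1) / ρo ^ (q - 1) := Real.div_rpow hx0.le hρ.le (q - 1)
    have e3 : ρo ^ q = ρo ^ (q - 1) * ρo := by
      rw [show q = q - 1 + 1 by ring, Real.rpow_add_one hρ.ne']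
      ring_nf
    have hc2 : 2 * π * lam = 2 * c := by rw [hcdef]; ring
    have hcd : c ^ (a - 1) ≠ 0 := (Real.rpow_pos_of_pos hc0 _).ne'
    have hρα : ρo ^ α ≠ 0 := (Real.rpow_pos_of_pos hρ _).ne'
    have hρq1 : ρo ^ (q - 1) ≠ 0 := (Real.rpow_pos_of_pos hρ _).ne'
    simp only [hfdef, hKdef]
    rw [e1, e2, e3, hc2, hqdef]
    field_simp
    ring
  -- integrability of f on [0, Pu]
  have hf_int : IntervalIntegrable f volume 0 Pu := by
    have hM0 : 0 < 2 * π * lam / (ηc * ρo ^ q * D) := by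
      have : (0:ℝ) < ρo ^ q := Real.rpow_pos_of_pos hρ q
      have := Real.pi_pos
      positivity
    have hg_int : IntervalIntegrable
        (fun x : ℝ => 2 * π * lam / (ηc * ρo ^ q * D) * x ^ (α + q - 1)) volume 0 Pu :=
      (intervalIntegral.intervalIntegrable_rpow' (by linarith)).const_mul _
    refine hg_int.mono_fun' ?_ ?_
    · rw [Set.uIoc_of_le hPu.le]
      refine ContinuousOn.aestronglyMeasurable ?_ measurableSet_Ioc
      intro x hx
      have hx0 : 0 < x := hx.1
      refine ContinuousAt.continuousWithinAt ?_
      have h1 : ContinuousAt (fun y : ℝ => y ^ α) x :=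
        Real.continuousAt_rpow_const x _ (Or.inl hx0.ne')
      have h2 : ContinuousAt (fun y : ℝ => y ^ (q - 1)) x :=
        Real.continuousAt_rpow_const x _ (Or.inl hx0.ne')
      have h3 : ContinuousAt (fun y : ℝ => Real.exp (-(c * (y / ρo) ^ q))) x :=
        (Real.continuous_exp.comp hφcont.neg).continuousAt
      exact (h1.mul ((continuousAt_const.mul h2).mul h3)).div_const _
    · rw [Set.uIoc_of_le hPu.le]
      refine (ae_restrict_iff' measurableSet_Ioc).2 (Filter.Eventually.of_forall fun x hx => ?_)
      show ‖f x‖ ≤ 2 * π * lam / (ηc * ρo ^ q * D) * x ^ (α + q - 1)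
      have hx0 : 0 < x := hx.1
      have hE : Real.exp (-(c * (x / ρo) ^ q)) ≤ 1 := by
        apply Real.exp_le_one_iff.mpr
        have : (0:ℝ) ≤ (x / ρo) ^ q := Real.rpow_nonneg (by positivity) q
        nlinarith
      have hfx : f x = 2 * π * lam / (ηc * ρo ^ q * D) * (x ^ α * x ^ (q - 1)) *
          Real.exp (-(c * (x / ρo) ^ q)) := by
        simp only [hfdef]; ring
      have hsplit : x ^ (α + q - 1) = x ^ α * x ^ (q - 1) := by
        rw [show α + q - 1 = α + (q - 1) by ring, Real.rpow_add hx0]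
      have hnn : 0 ≤ 2 * π * lam / (ηc * ρo ^ q * D) * (x ^ α * x ^ (q - 1)) := by
        have h1 : (0:ℝ) < ρo ^ q := Real.rpow_pos_of_pos hρ q
        have h2 : (0:ℝ) ≤ x ^ α := Real.rpow_nonneg hx0.le α
        have h3 : (0:ℝ) ≤ x ^ (q - 1) := Real.rpow_nonneg hx0.le (q - 1)
        have := Real.pi_pos
        positivity
      have : ‖f x‖ = f x := by
        rw [Real.norm_eq_abs, abs_of_nonneg]
        rw [hfx]
        exact mul_nonneg hnn (Real.exp_nonneg _)
      rw [this, hfx, hsplit]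
      exact mul_le_of_le_one_right hnn hE
  -- fundamental theorem of calculus
  have hFTC : (∫ x in (0:ℝ)..Pu, f x) = G Pu - G 0 :=
    intervalIntegral.integral_eq_sub_of_hasDeriv_right_of_le hPu.le hGcont.continuousOn
      (fun x hx => (hGderiv x hx).hasDerivWithinAt) hf_int
  have hφ0 : φ 0 = 0 := by
    show c * (0 / ρo) ^ q = 0
    rw [zero_div, Real.zero_rpow hq0.ne', mul_zero]
  have hG0 : G 0 = 0 := by
    show K * ∫ t in (0:ℝ)..(φ 0), t ^ (a - 1) * Real.exp (-t) = 0
    rw [hφ0, intervalIntegral.integral_same, mul_zero]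
  have hGPu : G Pu = K * lowerGamma a T := by
    show K * ∫ t in (0:ℝ)..(φ Pu), t ^ (a - 1) * Real.exp (-t) = _
    rw [lowerGamma]
  have hexp : c ^ (α * ηc / 2) = c ^ (a - 1) := by
    congr 1
    rw [hadef]; ring
  rw [hFTC, hG0, hGPu, sub_zero, hexp, hKdef]
  have hcd : c ^ (a - 1) ≠ 0 := (Real.rpow_pos_of_pos hc0 _).ne'
  field_simp
end

section
/- Let λ > 0, ρ_o > 0, T_d > 0, P_u > 0, η_c > 2, η_d > 2, α > 0. Then ∫₀^{P_u} x^α · (2 x^{2/η_d − 1} (πλ)^{η_c/η_d} e^{−πλ(x/(T_d ρ_o))^{2/η_c}}) / (η_c (T_d ρ_o)^{2/η_d} γ(η_c/η_d, πλ(P_u/(T_dρ_o))^{2/η_c})) dx = (T_d ρ_o)^α · γ(αη_c/2 + η_c/η_d, πλ(P_u/(T_dρ_o))^{2/η_c}) / ((πλ)^{αη_c/2} · γ(η_c/η_d, πλ(P_u/(T_dρ_o))^{2/η_c})). -/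
open Real MeasureTheory

lemma lg_integrableOn (s M : ℝ) (hs : 0 < s) :
    IntegrableOn (fun u : ℝ => u ^ (s - 1) * Real.exp (-u)) (Set.Icc 0 M) := by
  rw [integrableOn_Icc_iff_integrableOn_Ioc]
  exact ((Real.GammaIntegral_convergent hs).mono_set Set.Ioc_subset_Ioi_self).congr_fun
    (fun x _ => mul_comm _ _) measurableSet_Ioc

lemma lg_intervalIntegrable (s M : ℝ) (hs : 0 < s) (hM : 0 ≤ M) :
    IntervalIntegrable (fun u : ℝ => u ^ (s - 1) * Real.exp (-u)) volume 0 M := by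
  rw [intervalIntegrable_iff_integrableOn_Icc_of_le hM]
  exact lg_integrableOn s M hs

lemma lowerGamma_pos {s B : ℝ} (hs : 0 < s) (hB : 0 < B) : 0 < lowerGamma s B := by
  apply intervalIntegral.intervalIntegral_pos_of_pos_on (lg_intervalIntegrable s B hs hB.le) _ hB
  intro x hx
  exact mul_pos (Real.rpow_pos_of_pos hx.1 _) (Real.exp_pos _)

lemma key_s5 (k q s T : ℝ) (hk : 0 < k) (hq : 0 < q) (hs : 0 < s) (hT : 0 < T) :
    (∫ x in (0:ℝ)..T, x ^ (q * s - 1) * Real.exp (-(k * x ^ q)))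
      = (1 / (q * k ^ s)) * lowerGamma s (k * T ^ q) := by
  set g : ℝ → ℝ := fun u => u ^ (s - 1) * Real.exp (-u) with hgdef
  have hcont_pow : Continuous fun x : ℝ => x ^ q := by
    rw [continuous_iff_continuousAt]
    intro x
    exact Real.continuousAt_rpow_const x q (Or.inr hq.le)
  have hptwise : ∀ x : ℝ, 0 < x →
      (k * q * x ^ (q - 1)) * g (k * x ^ q)
        = (q * k ^ s) * (x ^ (q * s - 1) * Real.exp (-(k * x ^ q))) := by
    intro x hx
    have hxq : (0:ℝ) < x ^ q := Real.rpow_pos_of_pos hx q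
    have h1 : (k * x ^ q) ^ (s - 1) = k ^ (s - 1) * x ^ (q * (s - 1)) := by
      rw [Real.mul_rpow hk.le hxq.le, ← Real.rpow_mul hx.le]
    have h2 : x ^ (q - 1) * x ^ (q * (s - 1)) = x ^ (q * s - 1) := by
      rw [← Real.rpow_add hx]; ring_nf
    have h3 : k * k ^ (s - 1) = k ^ s := by
      nth_rewrite 1 [← Real.rpow_one k]
      rw [← Real.rpow_add hk]; ring_nf
    simp only [hgdef]
    rw [h1, ← h2, ← h3]; ring
  have hmin : min (0:ℝ) T = 0 := min_eq_left hT.le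
  have hmax : max (0:ℝ) T = T := max_eq_right hT.le
  have hne : ∀ᵐ (x : ℝ) ∂(volume.restrict (Set.Icc (0:ℝ) T)), x ≠ 0 := by
    apply ae_restrict_of_ae
    rw [ae_iff]
    simp only [not_not, Set.setOf_eq_eq_singleton]
    exact Real.volume_singleton
  have hInt : IntegrableOn (fun x : ℝ => x ^ (q * s - 1) * Real.exp (-(k * x ^ q)))
      (Set.Icc 0 T) := by
    apply IntegrableOn.mul_continuousOn _ _ isCompact_Icc
    · refine (intervalIntegrable_iff_integrableOn_Icc_of_le hT.le).mp
        (intervalIntegral.intervalIntegrable_rpow' ?_)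
      nlinarith [mul_pos hq hs]
    · exact (Real.continuous_exp.comp (continuous_const.mul hcont_pow).neg).continuousOn
  have hsub := intervalIntegral.integral_comp_smul_deriv''' (a := (0:ℝ)) (b := T)
    (f := fun x => k * x ^ q) (f' := fun x => k * q * x ^ (q - 1)) (g := g)
    ((continuous_const.mul hcont_pow).continuousOn)
    (by
      intro x hx
      rw [hmin, hmax] at hx
      have hd := (Real.hasDerivAt_rpow_const (x := x) (p := q) (Or.inl hx.1.ne')).const_mul k
      have : k * (q * x ^ (q - 1)) = k * q * x ^ (q - 1) := by ring
      rw [this] at hd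
      exact hd.hasDerivWithinAt)
    (by
      have hc : ContinuousOn g (Set.Ioi 0) := by
        apply ContinuousOn.mul
        · intro u hu
          exact (Real.continuousAt_rpow_const u (s - 1) (Or.inl (ne_of_gt hu))).continuousWithinAt
        · exact (Real.continuous_exp.comp continuous_neg).continuousOn
      refine hc.mono ?_
      rintro u ⟨x, hx, rfl⟩
      rw [hmin, hmax] at hx
      exact mul_pos hk (Real.rpow_pos_of_pos hx.1 q))
    (by
      apply (lg_integrableOn s (k * T ^ q) hs).mono_set
      rintro u ⟨x, hx, rfl⟩
      rw [Set.uIcc_of_le hT.le] at hx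
      constructor
      · exact mul_nonneg hk.le (Real.rpow_nonneg hx.1 q)
      · exact mul_le_mul_of_nonneg_left (Real.rpow_le_rpow hx.1 hx.2 hq.le) hk.le)
    (by
      rw [Set.uIcc_of_le hT.le]
      apply (hInt.const_mul (q * k ^ s)).congr
      filter_upwards [ae_restrict_mem measurableSet_Icc, hne] with x hx h0
      have hx0 : 0 < x := lt_of_le_of_ne hx.1 (Ne.symm h0)
      simp only [Function.comp, smul_eq_mul]
      exact (hptwise x hx0).symm)
  simp only [Function.comp] at hsub
  have hf0 : k * (0:ℝ) ^ q = 0 := by rw [Real.zero_rpow hq.ne']; ring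
  rw [hf0] at hsub
  have hconst : (0:ℝ) < q * k ^ s := mul_pos hq (Real.rpow_pos_of_pos hk s)
  have hstep : (∫ x in (0:ℝ)..T, x ^ (q * s - 1) * Real.exp (-(k * x ^ q)))
      = (1 / (q * k ^ s)) * ∫ x in (0:ℝ)..T, (k * q * x ^ (q - 1)) • g (k * x ^ q) := by
    rw [← intervalIntegral.integral_const_mul]
    apply intervalIntegral.integral_congr_ae
    apply Filter.Eventually.of_forall
    intro x hx
    have hx0 : 0 < x := by
      rcases Set.mem_uIoc.mp hx with h | h
      · exact h.1
      · exfalso; linarith [h.1, h.2]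
    rw [smul_eq_mul, hptwise x hx0]
    field_simp
  rw [hstep, hsub]
  rfl

theorem stmt5 (lam ρo Td Pu ηc ηd α : ℝ) (hlam : 0 < lam) (hρ : 0 < ρo) (hTd : 0 < Td)
    (hPu : 0 < Pu) (hc : 2 < ηc) (hd : 2 < ηd) (hα : 0 < α) :
    (∫ x in (0:ℝ)..Pu,
        x ^ α * (2 * x ^ (2 / ηd - 1) * (π * lam) ^ (ηc / ηd) *
            Real.exp (-(π * lam * (x / (Td * ρo)) ^ (2 / ηc)))) /
          (ηc * (Td * ρo) ^ (2 / ηd) *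
            lowerGamma (ηc / ηd) (π * lam * (Pu / (Td * ρo)) ^ (2 / ηc)))) =
      (Td * ρo) ^ α *
          lowerGamma (α * ηc / 2 + ηc / ηd) (π * lam * (Pu / (Td * ρo)) ^ (2 / ηc)) /
        ((π * lam) ^ (α * ηc / 2) *
          lowerGamma (ηc / ηd) (π * lam * (Pu / (Td * ρo)) ^ (2 / ηc))) := by
  have hπ : (0:ℝ) < π := Real.pi_pos
  set c : ℝ := Td * ρo with hcdef
  have hc0 : 0 < c := mul_pos hTd hρ
  set b : ℝ := π * lam with hbdef
  have hb0 : 0 < b := mul_pos hπ hlam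
  have hηc0 : (0:ℝ) < ηc := by linarith
  have hηd0 : (0:ℝ) < ηd := by linarith
  set q : ℝ := 2 / ηc with hqdef
  have hq0 : 0 < q := by positivity
  set s : ℝ := α * ηc / 2 + ηc / ηd with hsdef
  have hs0 : 0 < s := by positivity
  set k : ℝ := b / c ^ q with hkdef
  have hk0 : 0 < k := div_pos hb0 (Real.rpow_pos_of_pos hc0 q)
  have hkx : ∀ x : ℝ, 0 ≤ x → b * (x / c) ^ q = k * x ^ q := by
    intro x hx
    rw [Real.div_rpow hx hc0.le, hkdef]
    field_simp
  have hB : b * (Pu / c) ^ (2 / ηc) = k * Pu ^ q := by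
    rw [← hqdef]; exact hkx Pu hPu.le
  set B : ℝ := k * Pu ^ q with hBdef
  have hB0 : 0 < B := mul_pos hk0 (Real.rpow_pos_of_pos hPu q)
  have hG0 : 0 < lowerGamma (ηc / ηd) B := lowerGamma_pos (by positivity) hB0
  have hqs : q * s = α + 2 / ηd := by
    rw [hqdef, hsdef]; field_simp
  have hkey := key_s5 k q s Pu hk0 hq0 hs0 hPu
  have hstep : (∫ x in (0:ℝ)..Pu,
      x ^ α * (2 * x ^ (2 / ηd - 1) * b ^ (ηc / ηd) * Real.exp (-(b * (x / c) ^ q))) /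
        (ηc * c ^ (2 / ηd) * lowerGamma (ηc / ηd) B))
      = (2 * b ^ (ηc / ηd) / (ηc * c ^ (2 / ηd) * lowerGamma (ηc / ηd) B)) *
        ∫ x in (0:ℝ)..Pu, x ^ (q * s - 1) * Real.exp (-(k * x ^ q)) := by
    rw [← intervalIntegral.integral_const_mul]
    apply intervalIntegral.integral_congr_ae
    apply Filter.Eventually.of_forall
    intro x hx
    have hx0 : 0 < x := by
      rcases Set.mem_uIoc.mp hx with h | h
      · exact h.1
      · exfalso; linarith [h.1, h.2]
    rw [← hkx x hx0.le]
    have hpow : x ^ α * x ^ (2 / ηd - 1) = x ^ (q * s - 1) := by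
      rw [← Real.rpow_add hx0, hqs]; ring_nf
    rw [← hpow]
    ring
  have hks : k ^ s = b ^ (α * ηc / 2) * b ^ (ηc / ηd) / (c ^ α * c ^ (2 / ηd)) := by
    rw [hkdef, Real.div_rpow hb0.le (Real.rpow_pos_of_pos hc0 q).le, ← Real.rpow_mul hc0.le,
      hqs]
    rw [show (s : ℝ) = α * ηc / 2 + ηc / ηd from hsdef,
      Real.rpow_add hb0, Real.rpow_add hc0]
  rw [hB, hstep, hkey, ← hBdef]
  have h1 : (0:ℝ) < b ^ (α * ηc / 2) := Real.rpow_pos_of_pos hb0 _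
  have h2 : (0:ℝ) < b ^ (ηc / ηd) := Real.rpow_pos_of_pos hb0 _
  have h3 : (0:ℝ) < c ^ α := Real.rpow_pos_of_pos hc0 _
  have h4 : (0:ℝ) < c ^ (2 / ηd) := Real.rpow_pos_of_pos hc0 _
  rw [hks, hqdef]
  have hGne : lowerGamma (ηc / ηd) B ≠ 0 := hG0.ne'
  have hne1 : b ^ (α * ηc / 2) ≠ 0 := h1.ne'
  have hne2 : b ^ (ηc / ηd) ≠ 0 := h2.ne'
  have hne3 : c ^ α ≠ 0 := h3.ne'
  have hne4 : c ^ (2 / ηd) ≠ 0 := h4.ne'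
  have hηcne : ηc ≠ 0 := hηc0.ne'
  field_simp
end

section
/- Let λ > 0, ρ_o > 0, P_u > 0, η_c > 2, η_d > 2 and 0 < T_d ≤ 1. Let X̃_c have pdf f(x) = 2πλ x^{2/η_c−1} e^{−πλ(x/ρ_o)^{2/η_c}} / (η_c ρ_o^{2/η_c}(1 − e^{−πλ(P_u/ρ_o)^{2/η_c}})) on [0,P_u], and X_d independent with pdf 2x^{2/η_d−1}/(η_d P_u^{2/η_d}) on [0,P_u]. Then P{X̃_c < X_d/T_d} = 1 − T_d^{2/η_d} + T_d^{2/η_d}/(1 − e^{−πλ(P_u/ρ_o)^{2/η_c}}) − η_c (T_d ρ_o)^{2/η_d} γ(η_c/η_d, πλ(P_u/ρ_o)^{2/η_c}) / (η_d P_u^{2/η_d} (πλ)^{η_c/η_d} (1 − e^{−πλ(P_u/ρ_o)^{2/η_c}})). -/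
open Real MeasureTheory

open Set intervalIntegral

lemma sub_rpow {p m : ℝ} (hp : 0 < p) (hm : 0 ≤ m) (g : ℝ → ℝ)
    (hg : ContinuousOn g (Set.Ioi 0))
    (hgi : IntervalIntegrable g volume 0 (m ^ p))
    (hgi2 : IntervalIntegrable (fun x => p * x ^ (p - 1) * g (x ^ p)) volume 0 m) :
    ∫ x in (0:ℝ)..m, p * x ^ (p - 1) * g (x ^ p) = ∫ u in (0:ℝ)..(m ^ p), g u := by
  have h0 : (0:ℝ) ^ p = 0 := Real.zero_rpow hp.ne'
  have hmp : 0 ≤ m ^ p := Real.rpow_nonneg hm p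
  have himg : (fun x : ℝ => x ^ p) '' (Set.uIcc 0 m) ⊆ Icc 0 (m ^ p) := by
    rintro _ ⟨x, hx, rfl⟩
    rw [Set.uIcc_of_le hm] at hx
    exact ⟨Real.rpow_nonneg hx.1 p, Real.rpow_le_rpow hx.1 hx.2 hp.le⟩
  have key := intervalIntegral.integral_comp_smul_deriv''' (f := fun x : ℝ => x ^ p)
    (f' := fun x => p * x ^ (p - 1)) (g := g) (a := 0) (b := m)
    ((Real.continuous_rpow_const hp.le).continuousOn)
    (by
      intro x hx
      rw [min_eq_left hm, max_eq_right hm] at hx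
      have := Real.hasDerivAt_rpow_const (x := x) (p := p) (Or.inl hx.1.ne')
      simpa [mul_comm] using this.hasDerivWithinAt)
    (by
      refine hg.mono ?_
      rintro _ ⟨x, hx, rfl⟩
      rw [min_eq_left hm, max_eq_right hm] at hx
      exact Real.rpow_pos_of_pos hx.1 p)
    (by
      have := (intervalIntegrable_iff_integrableOn_Icc_of_le hmp).mp hgi
      exact this.mono_set (by simpa [Set.uIcc_of_le hm] using himg))
    (by
      have := (intervalIntegrable_iff_integrableOn_Icc_of_le hm).mp hgi2
      simpa [Set.uIcc_of_le hm, Function.comp, smul_eq_mul] using this)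
  simpa [h0, Function.comp, smul_eq_mul] using key

lemma exp_integral {c : ℝ} (hc : c ≠ 0) (M : ℝ) :
    ∫ u in (0:ℝ)..M, Real.exp (-(c * u)) = (1 - Real.exp (-(c * M))) / c := by
  have : ∀ u : ℝ, Real.exp (-(c * u)) = Real.exp ((-c) * u) := by intro u; ring_nf
  simp_rw [this]
  rw [intervalIntegral.integral_comp_mul_left (fun x => Real.exp x) (neg_ne_zero.mpr hc)]
  simp only [mul_zero, integral_exp, smul_eq_mul, inv_neg, Real.exp_zero]
  have : -c * M = -(c*M) := by ring
  rw [this]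
  field_simp
  ring

lemma inner_eval (lam ρo ηc : ℝ) (hlam : 0 < lam) (hρ : 0 < ρo) (hc : 2 < ηc) {m : ℝ} (hm : 0 ≤ m) :
    (∫ x in (0:ℝ)..m, 2 * π * lam * x ^ (2/ηc - 1) * Real.exp (-(π * lam * (x/ρo) ^ (2/ηc))))
      = ηc * ρo ^ (2/ηc) * (1 - Real.exp (-(π * lam * (m/ρo) ^ (2/ηc)))) := by
  have hηc : (0:ℝ) < ηc := by linarith
  set p : ℝ := 2/ηc with hpdef
  have hp : 0 < p := by positivity
  have hp1 : p < 1 := by rw [hpdef, div_lt_one hηc]; linarith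
  have hk : 0 < π * lam := by positivity
  set k : ℝ := π * lam with hkdef
  have hρp : 0 < ρo ^ p := Real.rpow_pos_of_pos hρ p
  set c : ℝ := k / ρo ^ p with hcdef
  have hc0 : 0 < c := by positivity
  have hgcont : Continuous fun u : ℝ => Real.exp (-(c * u)) := by
    exact Real.continuous_exp.comp ((continuous_const.mul continuous_id).neg)
  have hcont : Continuous fun x : ℝ => Real.exp (-(c * x ^ p)) := by
    exact Real.continuous_exp.comp ((continuous_const.mul (Real.continuous_rpow_const hp.le)).neg)
  have hgi2 : IntervalIntegrable (fun x => p * x ^ (p - 1) * Real.exp (-(c * x ^ p))) volume 0 m := by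
    exact (((intervalIntegrable_rpow' (by linarith)).const_mul p).mul_continuousOn
      hcont.continuousOn)
  have hps : (2*k/p) * p = 2 * k := by field_simp
  have hcong : ∀ x ∈ Set.uIcc (0:ℝ) m,
      2 * π * lam * x ^ (2/ηc - 1) * Real.exp (-(π * lam * (x/ρo) ^ (2/ηc)))
        = (2*k/p) * (p * x ^ (p - 1) * Real.exp (-(c * x ^ p))) := by
    intro x hx
    rw [Set.uIcc_of_le hm] at hx
    rw [show (2*k/p) * (p * x ^ (p-1) * Real.exp (-(c * x ^ p)))
        = ((2*k/p) * p) * (x ^ (p-1) * Real.exp (-(c * x ^ p))) from by ring, hps]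
    rw [Real.div_rpow hx.1 hρ.le]
    rw [hcdef, hkdef]
    rw [div_mul_eq_mul_div, mul_div_assoc]
    ring
  rw [intervalIntegral.integral_congr hcong, intervalIntegral.integral_const_mul,
    sub_rpow hp hm (fun u => Real.exp (-(c * u))) hgcont.continuousOn
      (hgcont.intervalIntegrable _ _) hgi2]
  rw [exp_integral hc0.ne' (m ^ p)]
  have hmm : c * m ^ p = k * (m/ρo) ^ p := by
    rw [Real.div_rpow hm hρ.le, hcdef]; field_simp
  rw [hmm, hcdef, hpdef, hkdef]
  field_simp

lemma J_eval (a c U : ℝ) (ha : 0 < a) (hc : 0 < c) (hU : 0 ≤ U) :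
    ∫ u in (0:ℝ)..U, u ^ (a-1) * Real.exp (-(c*u)) = c ^ (-a) * lowerGamma a (c*U) := by
  have hcong : ∀ u ∈ Set.uIcc (0:ℝ) U,
      u ^ (a-1) * Real.exp (-(c*u)) = c ^ (1-a) * ((c*u) ^ (a-1) * Real.exp (-(c*u))) := by
    intro u hu
    rw [Set.uIcc_of_le hU] at hu
    rw [Real.mul_rpow hc.le hu.1, ← mul_assoc, ← mul_assoc, ← Real.rpow_add hc]
    norm_num
  rw [intervalIntegral.integral_congr hcong, intervalIntegral.integral_const_mul,
    intervalIntegral.integral_comp_mul_left (fun t => t ^ (a-1) * Real.exp (-t)) hc.ne',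
    mul_zero, smul_eq_mul, ← mul_assoc, lowerGamma]
  congr 1
  rw [← Real.rpow_neg_one c, ← Real.rpow_add hc]
  ring_nf


set_option maxHeartbeats 1000000 in
theorem stmt7 (lam ρo Pu Td ηc ηd : ℝ) (hlam : 0 < lam) (hρ : 0 < ρo) (hPu : 0 < Pu)
    (hc : 2 < ηc) (hd : 2 < ηd) (hTd0 : 0 < Td) (hTd1 : Td ≤ 1) :
    (∫ y in (0:ℝ)..Pu,
        (2 * y ^ (2 / ηd - 1) / (ηd * Pu ^ (2 / ηd))) *
          ∫ x in (0:ℝ)..(min (y / Td) Pu),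
            2 * π * lam * x ^ (2 / ηc - 1) * Real.exp (-(π * lam * (x / ρo) ^ (2 / ηc))) /
              (ηc * ρo ^ (2 / ηc) *
                (1 - Real.exp (-(π * lam * (Pu / ρo) ^ (2 / ηc)))))) =
      1 - Td ^ (2 / ηd) +
        Td ^ (2 / ηd) / (1 - Real.exp (-(π * lam * (Pu / ρo) ^ (2 / ηc)))) -
        ηc * (Td * ρo) ^ (2 / ηd) * lowerGamma (ηc / ηd) (π * lam * (Pu / ρo) ^ (2 / ηc)) /
          (ηd * Pu ^ (2 / ηd) * (π * lam) ^ (ηc / ηd) *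
            (1 - Real.exp (-(π * lam * (Pu / ρo) ^ (2 / ηc))))) := by
  have hηc : (0:ℝ) < ηc := by linarith
  have hηd : (0:ℝ) < ηd := by linarith
  have hk : 0 < π * lam := by positivity
  have hp : (0:ℝ) < 2/ηc := by positivity
  have hp1 : 2/ηc < 1 := by rw [div_lt_one hηc]; linarith
  have hq : (0:ℝ) < 2/ηd := by positivity
  have hq1 : 2/ηd < 1 := by rw [div_lt_one hηd]; linarith
  have ha : (0:ℝ) < ηc/ηd := by positivity
  set E : ℝ := Real.exp (-(π * lam * (Pu/ρo) ^ (2/ηc))) with hEdef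
  have hE1 : E < 1 := by
    rw [hEdef, Real.exp_lt_one_iff, neg_lt_zero]
    positivity
  have hA : 0 < 1 - E := by linarith
  have hPq : 0 < Pu ^ (2/ηd) := Real.rpow_pos_of_pos hPu _
  have hTP : 0 ≤ Td * Pu := by positivity
  have hTPP : Td * Pu ≤ Pu := by nlinarith
  -- Step 1: evaluate the inner integral
  have hout : Set.EqOn
      (fun y => (2 * y ^ (2 / ηd - 1) / (ηd * Pu ^ (2 / ηd))) *
          ∫ x in (0:ℝ)..(min (y / Td) Pu),
            2 * π * lam * x ^ (2 / ηc - 1) * Real.exp (-(π * lam * (x / ρo) ^ (2 / ηc))) /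
              (ηc * ρo ^ (2 / ηc) * (1 - E)))
      (fun y => (2 * y ^ (2 / ηd - 1) / (ηd * Pu ^ (2 / ηd))) *
          ((1 - Real.exp (-(π * lam * (min (y / Td) Pu / ρo) ^ (2 / ηc)))) / (1 - E)))
      (Set.uIcc 0 Pu) := by
    intro y hy
    rw [Set.uIcc_of_le hPu.le] at hy
    simp only
    congr 1
    have hm : 0 ≤ min (y / Td) Pu := le_min (div_nonneg hy.1 hTd0.le) hPu.le
    rw [intervalIntegral.integral_div, inner_eval lam ρo ηc hlam hρ hc hm,
      mul_div_mul_left _ _ (by positivity : ηc * ρo ^ (2/ηc) ≠ 0)]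
  rw [intervalIntegral.integral_congr hout]
  -- continuity and integrability of the outer integrand
  have hHcont : Continuous (fun y : ℝ =>
      (1 - Real.exp (-(π * lam * (min (y / Td) Pu / ρo) ^ (2 / ηc)))) / (1 - E)) := by
    apply Continuous.div_const
    apply Continuous.sub continuous_const
    apply Real.continuous_exp.comp
    apply Continuous.neg
    apply Continuous.mul continuous_const
    exact (Real.continuous_rpow_const hp.le).comp
      (((continuous_id.div_const Td).min continuous_const).div_const ρo)
  have hint : ∀ u v : ℝ, IntervalIntegrable (fun y =>
      (2 * y ^ (2 / ηd - 1) / (ηd * Pu ^ (2 / ηd))) *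
        ((1 - Real.exp (-(π * lam * (min (y / Td) Pu / ρo) ^ (2 / ηc)))) / (1 - E)))
      volume u v := fun u v =>
    (((intervalIntegrable_rpow' (by linarith)).const_mul 2).div_const _).mul_continuousOn
      hHcont.continuousOn
  rw [← intervalIntegral.integral_add_adjacent_intervals (hint 0 (Td*Pu)) (hint (Td*Pu) Pu)]
  -- Piece 2 : from Td*Pu to Pu
  have h2 : (∫ y in (Td*Pu)..Pu,
      (2 * y ^ (2 / ηd - 1) / (ηd * Pu ^ (2 / ηd))) *
        ((1 - Real.exp (-(π * lam * (min (y / Td) Pu / ρo) ^ (2 / ηc)))) / (1 - E)))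
      = 1 - Td ^ (2/ηd) := by
    have hcong2 : Set.EqOn
        (fun y => (2 * y ^ (2 / ηd - 1) / (ηd * Pu ^ (2 / ηd))) *
          ((1 - Real.exp (-(π * lam * (min (y / Td) Pu / ρo) ^ (2 / ηc)))) / (1 - E)))
        (fun y : ℝ => (2 / (ηd * Pu ^ (2 / ηd))) * y ^ (2 / ηd - 1))
        (Set.uIcc (Td*Pu) Pu) := by
      intro y hy
      rw [Set.uIcc_of_le hTPP] at hy
      have hmin : min (y / Td) Pu = Pu := min_eq_right (by
        rw [le_div_iff₀ hTd0]; nlinarith [hy.1])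
      simp only [hmin, ← hEdef, div_self hA.ne']
      ring
    rw [intervalIntegral.integral_congr hcong2, intervalIntegral.integral_const_mul,
      integral_rpow (Or.inl (by linarith))]
    rw [show 2/ηd - 1 + 1 = 2/ηd from by ring, Real.mul_rpow hTd0.le hPu.le]
    field_simp
  -- Piece 1 : from 0 to Td*Pu
  have hTρ : 0 < (Td * ρo) ^ (2/ηc) := Real.rpow_pos_of_pos (by positivity) _
  set c₁ : ℝ := π * lam / (Td * ρo) ^ (2/ηc) with hc₁def
  have hc₁ : 0 < c₁ := by positivity
  have hexpc : Continuous (fun y : ℝ => Real.exp (-(c₁ * y ^ (2/ηc)))) :=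
    Real.continuous_exp.comp ((continuous_const.mul (Real.continuous_rpow_const hp.le)).neg)
  have int_b : IntervalIntegrable
      (fun y : ℝ => y ^ (2/ηd - 1) * Real.exp (-(c₁ * y ^ (2/ηc)))) volume 0 (Td*Pu) :=
    (intervalIntegrable_rpow' (by linarith)).mul_continuousOn hexpc.continuousOn
  have h1 : (∫ y in (0:ℝ)..(Td*Pu),
      (2 * y ^ (2 / ηd - 1) / (ηd * Pu ^ (2 / ηd))) *
        ((1 - Real.exp (-(π * lam * (min (y / Td) Pu / ρo) ^ (2 / ηc)))) / (1 - E)))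
      = Td ^ (2/ηd) / (1 - E) -
        ηc * (Td * ρo) ^ (2 / ηd) * lowerGamma (ηc / ηd) (π * lam * (Pu / ρo) ^ (2 / ηc)) /
          (ηd * Pu ^ (2 / ηd) * (π * lam) ^ (ηc / ηd) * (1 - E)) := by
    have hcong1 : Set.EqOn
        (fun y => (2 * y ^ (2 / ηd - 1) / (ηd * Pu ^ (2 / ηd))) *
          ((1 - Real.exp (-(π * lam * (min (y / Td) Pu / ρo) ^ (2 / ηc)))) / (1 - E)))
        (fun y : ℝ => (2 / (ηd * Pu ^ (2/ηd) * (1 - E))) *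
          (y ^ (2/ηd - 1) - y ^ (2/ηd - 1) * Real.exp (-(c₁ * y ^ (2/ηc)))))
        (Set.uIcc 0 (Td*Pu)) := by
      intro y hy
      rw [Set.uIcc_of_le hTP] at hy
      have hmin : min (y / Td) Pu = y / Td := min_eq_left (by
        rw [div_le_iff₀ hTd0]; nlinarith [hy.2])
      simp only [hmin, div_div]
      rw [Real.div_rpow hy.1 (by positivity), show
        π * lam * (y ^ (2/ηc) / (Td * ρo) ^ (2/ηc)) = c₁ * y ^ (2/ηc) from by
          rw [hc₁def]; ring]
      field_simp
    rw [intervalIntegral.integral_congr hcong1, intervalIntegral.integral_const_mul,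
      intervalIntegral.integral_sub (intervalIntegrable_rpow' (by linarith)) int_b,
      integral_rpow (Or.inl (by linarith)),
      show 2/ηd - 1 + 1 = 2/ηd from by ring,
      Real.zero_rpow (by positivity : 2/ηd ≠ 0)]
    -- evaluate the exponential part by substitution
    have hgOn : ContinuousOn (fun u : ℝ => u ^ (ηc/ηd - 1) * Real.exp (-(c₁ * u)))
        (Set.Ioi 0) := by
      refine ContinuousOn.mul ?_ ?_
      · exact fun u hu =>
          (Real.continuousAt_rpow_const u _ (Or.inl (ne_of_gt hu))).continuousWithinAt
      · exact (Real.continuous_exp.comp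
          ((continuous_const.mul continuous_id).neg)).continuousOn
    have hgint : IntervalIntegrable (fun u : ℝ => u ^ (ηc/ηd - 1) * Real.exp (-(c₁ * u)))
        volume 0 ((Td*Pu) ^ (2/ηc)) :=
      (intervalIntegrable_rpow' (by linarith)).mul_continuousOn
        (Real.continuous_exp.comp ((continuous_const.mul continuous_id).neg)).continuousOn
    have hgint2 : IntervalIntegrable
        (fun y : ℝ => 2/ηc * y ^ (2/ηc - 1) * ((y ^ (2/ηc)) ^ (ηc/ηd - 1) *
          Real.exp (-(c₁ * y ^ (2/ηc))))) volume 0 (Td*Pu) := by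
      rw [intervalIntegrable_iff] at int_b ⊢
      have base : IntegrableOn
          (fun y : ℝ => 2/ηc * (y ^ (2/ηd - 1) * Real.exp (-(c₁ * y ^ (2/ηc)))))
          (Set.uIoc 0 (Td*Pu)) volume := int_b.const_mul _
      refine base.congr_fun ?_ measurableSet_uIoc
      intro y hy
      rw [Set.uIoc_of_le hTP] at hy
      have e1 : (y ^ (2/ηc)) ^ (ηc/ηd - 1) = y ^ (2/ηd - 2/ηc) := by
        rw [← Real.rpow_mul hy.1.le]; congr 1; field_simp
      have e2 : y ^ (2/ηc - 1) * y ^ (2/ηd - 2/ηc) = y ^ (2/ηd - 1) := by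
        rw [← Real.rpow_add hy.1]; congr 1; ring
      simp only [e1]
      rw [show (2:ℝ)/ηc * y ^ (2/ηc-1) * (y ^ (2/ηd - 2/ηc) * Real.exp (-(c₁ * y ^ (2/ηc))))
          = 2/ηc * (y ^ (2/ηc-1) * y ^ (2/ηd - 2/ηc)) * Real.exp (-(c₁ * y ^ (2/ηc)))
          from by ring, e2]
      ring
    have hsubcong : Set.EqOn
        (fun y : ℝ => y ^ (2/ηd - 1) * Real.exp (-(c₁ * y ^ (2/ηc))))
        (fun y : ℝ => (ηc/2) * (2/ηc * y ^ (2/ηc - 1) * ((y ^ (2/ηc)) ^ (ηc/ηd - 1) *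
          Real.exp (-(c₁ * y ^ (2/ηc))))))
        (Set.uIcc 0 (Td*Pu)) := by
      intro y hy
      rw [Set.uIcc_of_le hTP] at hy
      rcases eq_or_lt_of_le hy.1 with h0 | h0
      · simp only [← h0]
        rw [Real.zero_rpow (by intro h; nlinarith : 2/ηd - 1 ≠ 0),
          Real.zero_rpow (by intro h; nlinarith : 2/ηc - 1 ≠ 0)]
        ring
      · have e1 : (y ^ (2/ηc)) ^ (ηc/ηd - 1) = y ^ (2/ηd - 2/ηc) := by
          rw [← Real.rpow_mul h0.le]; congr 1; field_simp
        have e2 : y ^ (2/ηc - 1) * y ^ (2/ηd - 2/ηc) = y ^ (2/ηd - 1) := by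
          rw [← Real.rpow_add h0]; congr 1; ring
        simp only [e1]
        rw [show (ηc/2) * ((2:ℝ)/ηc * y ^ (2/ηc-1) * (y ^ (2/ηd - 2/ηc) *
            Real.exp (-(c₁ * y ^ (2/ηc)))))
            = (ηc/2) * (2/ηc) * (y ^ (2/ηc-1) * y ^ (2/ηd - 2/ηc)) *
              Real.exp (-(c₁ * y ^ (2/ηc))) from by ring, e2,
          show (ηc/2) * ((2:ℝ)/ηc) = 1 from by field_simp]
        ring
    rw [intervalIntegral.integral_congr hsubcong, intervalIntegral.integral_const_mul,
      sub_rpow hp hTP (fun u => u ^ (ηc/ηd - 1) * Real.exp (-(c₁ * u))) hgOn hgint hgint2,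
      J_eval (ηc/ηd) c₁ ((Td*Pu) ^ (2/ηc)) ha hc₁ (Real.rpow_nonneg hTP _)]
    have hB : c₁ * (Td*Pu) ^ (2/ηc) = π * lam * (Pu/ρo) ^ (2/ηc) := by
      rw [hc₁def, div_mul_eq_mul_div, mul_div_assoc, ← Real.div_rpow hTP (by positivity),
        mul_div_mul_left _ _ hTd0.ne']
    have hc₁a : c₁ ^ (-(ηc/ηd)) = (Td * ρo) ^ (2/ηd) / (π * lam) ^ (ηc/ηd) := by
      rw [Real.rpow_neg hc₁.le, hc₁def, Real.div_rpow hk.le hTρ.le,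
        ← Real.rpow_mul (by positivity : (0:ℝ) ≤ Td * ρo),
        show 2/ηc * (ηc/ηd) = 2/ηd from by field_simp, inv_div]
    rw [hB, hc₁a, Real.mul_rpow hTd0.le hPu.le]
    have hka : 0 < (π * lam) ^ (ηc/ηd) := Real.rpow_pos_of_pos hk _
    have t1 : 2 / (ηd * Pu^(2/ηd) * (1-E)) * (Td^(2/ηd) * Pu^(2/ηd) / (2/ηd))
        = Td^(2/ηd)/(1-E) := by
      field_simp
    have t2 : 2 / (ηd * Pu^(2/ηd) * (1-E)) * (ηc/2 * ((Td*ρo)^(2/ηd)/(π*lam)^(ηc/ηd) *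
          lowerGamma (ηc/ηd) (π * lam * (Pu/ρo) ^ (2/ηc))))
        = ηc * (Td*ρo)^(2/ηd) * lowerGamma (ηc/ηd) (π * lam * (Pu/ρo) ^ (2/ηc)) /
          (ηd * Pu^(2/ηd) * (π*lam)^(ηc/ηd) * (1-E)) := by
      field_simp
    rw [sub_zero, mul_sub, t1, t2]
  rw [h1, h2]
  rw [hEdef]
  ring
end

section
/- Let λ > 0, ρ_o > 0, η_c > 2. The function M(ρ_o) = ρ_o · γ(η_c/2 + 1, πλ(P_u/ρ_o)^{2/η_c}) / ((πλ)^{η_c/2}(1 − e^{−πλ(P_u/ρ_o)^{2/η_c}})), the mean cellular transmit power E[P₂] with α = 1, is monotonically increasing in ρ_o on (0, P_u], and M(ρ_o) ≤ P_u for all ρ_o ∈ (0, P_u]. -/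
open Real MeasureTheory

open intervalIntegral

noncomputable def Af (s t : ℝ) : ℝ := ∫ x in (0:ℝ)..t, x ^ s * Real.exp (-x)
noncomputable def Bf (s t : ℝ) : ℝ := t ^ s * (1 - Real.exp (-t))

-- slope of exp monotone
lemma slope_exp {x y : ℝ} (hx : 0 < x) (hxy : x ≤ y) :
    (Real.exp x - 1) / x ≤ (Real.exp y - 1) / y := by
  have := convexOn_exp.secant_mono (a := 0) (x := x) (y := y) trivial trivial trivial
    hx.ne' (lt_of_lt_of_le hx hxy).ne' hxy
  simpa using this

-- pointwise: B' x ≤ k * A' x for 0 ≤ x ≤ c, where k = s*(exp c - 1)/c + 1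
lemma ptwise_le (s : ℝ) (hs : 1 ≤ s) {c x : ℝ} (hc : 0 < c) (hx : 0 ≤ x) (hxc : x ≤ c) :
    s * x ^ (s-1) * (1 - Real.exp (-x)) + x ^ s * Real.exp (-x)
      ≤ (s * ((Real.exp c - 1)/c) + 1) * (x ^ s * Real.exp (-x)) := by
  rcases eq_or_lt_of_le hx with h0 | h0
  · simp [← h0, Real.zero_rpow (by linarith : s ≠ 0)]
  have hxs : x ^ s = x ^ (s-1) * x := by
    rw [← Real.rpow_add_one (ne_of_gt h0)]; ring_nf
  have key : (Real.exp x - 1)/x ≤ (Real.exp c - 1)/c := slope_exp h0 hxc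
  have hxe : (0:ℝ) < x ^ (s-1) * Real.exp (-x) := by positivity
  have h1 : 1 - Real.exp (-x) = (Real.exp x - 1) * Real.exp (-x) := by
    rw [Real.exp_neg]; field_simp
  rw [hxs, h1]
  have : (Real.exp x - 1) ≤ (Real.exp c - 1)/c * x := by
    have := (div_le_iff₀ h0).mp key; linarith
  calc s * x ^ (s-1) * ((Real.exp x - 1) * Real.exp (-x)) + x ^ (s-1) * x * Real.exp (-x)
      ≤ s * x ^ (s-1) * ((Real.exp c - 1)/c * x * Real.exp (-x)) + x ^ (s-1) * x * Real.exp (-x) := by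
        have hsx : (0:ℝ) ≤ s * x ^ (s-1) * Real.exp (-x) := by positivity
        nlinarith [hsx, this]
    _ = (s * ((Real.exp c - 1)/c) + 1) * (x ^ (s-1) * x * Real.exp (-x)) := by ring

lemma ptwise_ge (s : ℝ) (hs : 1 ≤ s) {c x : ℝ} (hc : 0 < c) (hcx : c ≤ x) :
    (s * ((Real.exp c - 1)/c) + 1) * (x ^ s * Real.exp (-x))
      ≤ s * x ^ (s-1) * (1 - Real.exp (-x)) + x ^ s * Real.exp (-x) := by
  have h0 : 0 < x := lt_of_lt_of_le hc hcx
  have hxs : x ^ s = x ^ (s-1) * x := by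
    rw [← Real.rpow_add_one (ne_of_gt h0)]; ring_nf
  have key : (Real.exp c - 1)/c ≤ (Real.exp x - 1)/x := slope_exp hc hcx
  have h1 : 1 - Real.exp (-x) = (Real.exp x - 1) * Real.exp (-x) := by
    rw [Real.exp_neg]; field_simp
  rw [hxs, h1]
  have : (Real.exp c - 1)/c * x ≤ (Real.exp x - 1) := by
    have := (le_div_iff₀ h0).mp key; linarith
  have hsx : (0:ℝ) ≤ s * x ^ (s-1) * Real.exp (-x) := by positivity
  nlinarith [hsx, this]

lemma contA (s : ℝ) (hs : 0 ≤ s) : Continuous (fun x : ℝ => x ^ s * Real.exp (-x)) := by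
  apply Continuous.mul ?_ (by continuity)
  exact continuous_iff_continuousAt.2 fun x => Real.continuousAt_rpow_const x s (Or.inr hs)

lemma contB' (s : ℝ) (hs : 1 ≤ s) :
    Continuous (fun x : ℝ => s * x ^ (s-1) * (1 - Real.exp (-x)) + x ^ s * Real.exp (-x)) := by
  apply Continuous.add ?_ (contA s (by linarith))
  apply Continuous.mul (Continuous.mul continuous_const ?_) (by continuity)
  exact continuous_iff_continuousAt.2 fun x => Real.continuousAt_rpow_const x (s-1) (Or.inr (by linarith))

lemma hasDerivB (s : ℝ) (hs : 1 ≤ s) (x : ℝ) :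
    HasDerivAt (fun x : ℝ => x ^ s * (1 - Real.exp (-x)))
      (s * x ^ (s-1) * (1 - Real.exp (-x)) + x ^ s * Real.exp (-x)) x := by
  have h1 : HasDerivAt (fun x : ℝ => x ^ s) (s * x ^ (s-1)) x :=
    Real.hasDerivAt_rpow_const (Or.inr hs)
  have h2 : HasDerivAt (fun x : ℝ => Real.exp (-x)) (-Real.exp (-x)) x := by
    simpa using (hasDerivAt_neg x).exp
  have h3 : HasDerivAt (fun x : ℝ => 1 - Real.exp (-x)) (Real.exp (-x)) x := by
    simpa using h2.const_sub 1
  simpa [Pi.mul_def] using h1.mul h3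

lemma ftcB (s : ℝ) (hs : 1 ≤ s) (a b : ℝ) :
    ∫ x in a..b, (s * x ^ (s-1) * (1 - Real.exp (-x)) + x ^ s * Real.exp (-x)) = Bf s b - Bf s a := by
  exact integral_eq_sub_of_hasDerivAt (fun x _ => hasDerivB s hs x)
    ((contB' s hs).intervalIntegrable a b)

lemma A_nonneg (s t : ℝ) (hs : 0 ≤ s) (ht : 0 ≤ t) : 0 ≤ Af s t := by
  apply intervalIntegral.integral_nonneg ht
  intro x hx
  have : 0 ≤ x ^ s := Real.rpow_nonneg hx.1 s
  positivity

lemma A_mono (s : ℝ) (hs : 0 ≤ s) {a b : ℝ} (ha : 0 ≤ a) (hab : a ≤ b) : Af s a ≤ Af s b := by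
  unfold Af
  rw [← intervalIntegral.integral_add_adjacent_intervals
    (((contA s hs)).intervalIntegrable 0 a) (((contA s hs)).intervalIntegrable a b)]
  have : 0 ≤ ∫ x in a..b, x ^ s * Real.exp (-x) := by
    apply intervalIntegral.integral_nonneg hab
    intro x hx
    have : 0 ≤ x ^ s := Real.rpow_nonneg (le_trans ha hx.1) s
    positivity
  linarith

lemma B_pos (s : ℝ) {t : ℝ} (ht : 0 < t) : 0 < Bf s t := by
  have h1 : (0:ℝ) < t ^ s := Real.rpow_pos_of_pos ht s
  have h2 : Real.exp (-t) < 1 := Real.exp_lt_one_iff.mpr (by linarith)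
  unfold Bf; nlinarith

lemma B_mono (s : ℝ) (hs : 1 ≤ s) {a b : ℝ} (ha : 0 ≤ a) (hab : a ≤ b) : Bf s a ≤ Bf s b := by
  have := ftcB s hs a b
  have h2 : 0 ≤ ∫ x in a..b, (s * x ^ (s-1) * (1 - Real.exp (-x)) + x ^ s * Real.exp (-x)) := by
    apply intervalIntegral.integral_nonneg hab
    intro x hx
    have hx0 : 0 ≤ x := le_trans ha hx.1
    have e1 : 0 ≤ x ^ (s-1) := Real.rpow_nonneg hx0 _
    have e2 : 0 ≤ x ^ s := Real.rpow_nonneg hx0 _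
    have e3 : Real.exp (-x) ≤ 1 := Real.exp_le_one_iff.mpr (by linarith)
    have e4 : 0 < Real.exp (-x) := Real.exp_pos _
    have e5 : 0 ≤ s * x ^ (s-1) * (1 - Real.exp (-x)) :=
      mul_nonneg (mul_nonneg (by linarith) e1) (by linarith)
    nlinarith
  linarith

/-- Key: A/B is antitone, in cross-multiplied form. -/
lemma ratio_anti (s : ℝ) (hs : 1 ≤ s) {c t : ℝ} (hc : 0 < c) (hct : c ≤ t) :
    Af s t * Bf s c ≤ Af s c * Bf s t := by
  set k : ℝ := s * ((Real.exp c - 1)/c) + 1 with hk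
  have hk0 : 0 < k := by
    have h : 0 < (Real.exp c - 1)/c := by
      have := Real.add_one_lt_exp (ne_of_gt hc)
      exact div_pos (by linarith) hc
    rw [hk]; nlinarith [mul_pos (show (0:ℝ) < s by linarith) h]
  -- B c ≤ k * A c
  have h1 : Bf s c ≤ k * Af s c := by
    have := intervalIntegral.integral_mono_on (μ := volume) (a := 0) (b := c) (le_of_lt hc)
      ((contB' s hs).intervalIntegrable 0 c)
      ((continuous_const.mul (contA s (by linarith))).intervalIntegrable 0 c)
      (fun x hx => ptwise_le s hs hc hx.1 hx.2)
    rw [ftcB s hs 0 c] at this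
    simp only [Bf, Real.rpow_natCast] at this ⊢
    simp only [Pi.mul_apply] at this
    rw [intervalIntegral.integral_const_mul] at this
    simpa [Bf, Af] using this
  -- k * (A t - A c) ≤ B t - B c
  have h2 : k * (Af s t - Af s c) ≤ Bf s t - Bf s c := by
    have := intervalIntegral.integral_mono_on (μ := volume) (a := c) (b := t) hct
      ((continuous_const.mul (contA s (by linarith))).intervalIntegrable c t)
      ((contB' s hs).intervalIntegrable c t)
      (fun x hx => ptwise_ge s hs hc hx.1)
    simp only [Pi.mul_apply] at this
    rw [ftcB s hs c t, intervalIntegral.integral_const_mul] at this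
    have hAsplit : (∫ x in c..t, x ^ s * Real.exp (-x)) = Af s t - Af s c := by
      have := intervalIntegral.integral_add_adjacent_intervals (μ := volume)
        ((contA s (by linarith : (0:ℝ) ≤ s)).intervalIntegrable 0 c)
        ((contA s (by linarith : (0:ℝ) ≤ s)).intervalIntegrable c t)
      unfold Af; linarith [this]
    rw [hAsplit] at this; exact this
  have hAc : 0 ≤ Af s c := A_nonneg s c (by linarith) (le_of_lt hc)
  have hAct : Af s c ≤ Af s t := A_mono s (by linarith) (le_of_lt hc) hct
  have hBc : 0 < Bf s c := B_pos s hc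
  nlinarith [mul_le_mul_of_nonneg_right h2 hAc, mul_le_mul_of_nonneg_left h1 (sub_nonneg.2 hAct)]

lemma A_le_B (s : ℝ) (hs : 0 ≤ s) {t : ℝ} (ht : 0 < t) : Af s t ≤ Bf s t := by
  have : Af s t ≤ ∫ x in (0:ℝ)..t, t ^ s * Real.exp (-x) := by
    apply intervalIntegral.integral_mono_on (μ := volume) (le_of_lt ht)
      ((contA s hs).intervalIntegrable 0 t)
      ((continuous_const.mul (by continuity : Continuous fun x : ℝ => Real.exp (-x))).intervalIntegrable 0 t)
    intro x hx
    exact mul_le_mul_of_nonneg_right (Real.rpow_le_rpow hx.1 hx.2 hs) (le_of_lt (Real.exp_pos _))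
  have h2 : (∫ x in (0:ℝ)..t, t ^ s * Real.exp (-x)) = t ^ s * (1 - Real.exp (-t)) := by
    rw [intervalIntegral.integral_const_mul]
    have : (∫ x in (0:ℝ)..t, Real.exp (-x)) = 1 - Real.exp (-t) := by
      have hd : ∀ x ∈ Set.uIcc (0:ℝ) t, HasDerivAt (fun y : ℝ => -Real.exp (-y)) (Real.exp (-x)) x := by
        intro x _
        have h2 : HasDerivAt (fun y : ℝ => Real.exp (-y)) (-Real.exp (-x)) x := by
          simpa using (hasDerivAt_neg x).exp
        simpa [Pi.neg_def] using h2.neg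
      rw [integral_eq_sub_of_hasDerivAt hd ((by continuity : Continuous fun x : ℝ => Real.exp (-x)).intervalIntegrable 0 t)]
      simp only [neg_zero, Real.exp_zero]; ring
    rw [this]
  rw [h2] at this; exact this

lemma lowerGamma_eq (ηc b : ℝ) : lowerGamma (ηc / 2 + 1) b = Af (ηc / 2) b := by
  unfold lowerGamma Af
  have : ηc / 2 + 1 - 1 = ηc / 2 := by ring
  rw [this]

theorem stmt19 (lam Pu ηc : ℝ) (hlam : 0 < lam) (hPu : 0 < Pu) (hc : 2 < ηc) :
    MonotoneOn (fun ρo : ℝ =>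
        ρo * lowerGamma (ηc / 2 + 1) (π * lam * (Pu / ρo) ^ (2 / ηc)) /
          ((π * lam) ^ (ηc / 2) *
            (1 - Real.exp (-(π * lam * (Pu / ρo) ^ (2 / ηc)))))) (Set.Ioc 0 Pu) ∧
    ∀ ρo ∈ Set.Ioc (0:ℝ) Pu,
      ρo * lowerGamma (ηc / 2 + 1) (π * lam * (Pu / ρo) ^ (2 / ηc)) /
          ((π * lam) ^ (ηc / 2) *
            (1 - Real.exp (-(π * lam * (Pu / ρo) ^ (2 / ηc))))) ≤ Pu := by
  have hη : (0:ℝ) < ηc := by linarith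
  have hs : (1:ℝ) ≤ ηc / 2 := by linarith
  set s : ℝ := ηc / 2 with hsdef
  set T : ℝ → ℝ := fun ρ => π * lam * (Pu / ρ) ^ (2 / ηc) with hT
  have hπl : (0:ℝ) < π * lam := by positivity
  have hTpos : ∀ ρ : ℝ, 0 < ρ → 0 < T ρ := by
    intro ρ hρ
    have : (0:ℝ) < (Pu / ρ) ^ (2 / ηc) := Real.rpow_pos_of_pos (div_pos hPu hρ) _
    positivity
  -- M ρ = Pu * Af s (T ρ) / Bf s (T ρ)
  have hM : ∀ ρ : ℝ, ρ ∈ Set.Ioc (0:ℝ) Pu →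
      ρ * lowerGamma (ηc / 2 + 1) (T ρ) / ((π * lam) ^ s * (1 - Real.exp (-(T ρ))))
        = Pu * Af s (T ρ) / Bf s (T ρ) := by
    intro ρ hρ
    have hρ0 : 0 < ρ := hρ.1
    have hB : Bf s (T ρ) = (π * lam) ^ s * (Pu / ρ) * (1 - Real.exp (-(T ρ))) := by
      unfold Bf
      have e1 : (π * lam * (Pu / ρ) ^ (2 / ηc)) ^ s
          = (π * lam) ^ s * ((Pu / ρ) ^ (2 / ηc)) ^ s := by
        exact Real.mul_rpow hπl.le (Real.rpow_nonneg (div_nonneg hPu.le hρ0.le) _)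
      have e2 : ((Pu / ρ) ^ (2 / ηc)) ^ s = Pu / ρ := by
        rw [← Real.rpow_mul (div_nonneg hPu.le hρ0.le)]
        rw [show 2 / ηc * s = 1 by rw [hsdef]; field_simp]
        exact Real.rpow_one _
      show (T ρ) ^ s * (1 - Real.exp (-(T ρ))) = _
      rw [hT]; dsimp only; rw [e1, e2]
    rw [lowerGamma_eq, hB]
    have hTp := hTpos ρ hρ0
    have he : Real.exp (-(T ρ)) < 1 := Real.exp_lt_one_iff.mpr (by linarith)
    have hπs : (0:ℝ) < (π * lam) ^ s := Real.rpow_pos_of_pos hπl _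
    have hρPu : ρ * (Pu / ρ) = Pu := by field_simp
    have hd1 : (π * lam) ^ s * (1 - Real.exp (-(T ρ))) ≠ 0 :=
      (mul_pos hπs (by linarith)).ne'
    have hd2 : (π * lam) ^ s * (Pu / ρ) * (1 - Real.exp (-(T ρ))) ≠ 0 :=
      (mul_pos (mul_pos hπs (div_pos hPu hρ0)) (by linarith)).ne'
    rw [div_eq_div_iff hd1 hd2]
    linear_combination (Af s (T ρ) * (π * lam) ^ s * (1 - Real.exp (-(T ρ)))) * hρPu
  constructor
  · intro ρ1 h1 ρ2 h2 h12
    simp only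
    rw [hM ρ1 h1, hM ρ2 h2]
    have hT21 : T ρ2 ≤ T ρ1 := by
      have : Pu / ρ2 ≤ Pu / ρ1 := div_le_div_of_nonneg_left hPu.le h1.1 h12
      have := Real.rpow_le_rpow (div_nonneg hPu.le h2.1.le) this (by positivity : (0:ℝ) ≤ 2/ηc)
      exact mul_le_mul_of_nonneg_left this hπl.le
    have hT2 : 0 < T ρ2 := hTpos ρ2 h2.1
    have hT1 : 0 < T ρ1 := hTpos ρ1 h1.1
    rw [div_le_div_iff₀ (B_pos s hT1) (B_pos s hT2)]
    have := ratio_anti s hs hT2 hT21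
    nlinarith [this, hPu.le]
  · intro ρ hρ
    rw [hM ρ hρ]
    rw [div_le_iff₀ (B_pos s (hTpos ρ hρ.1))]
    have := A_le_B s (by linarith) (hTpos ρ hρ.1)
    nlinarith [this, hPu.le]
end
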